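/- Let U ⊆ ℝ² be open, let X : U → ℝ³ be twice continuously differentiable with harmonic components ∂₁∂₁X + ∂₂∂₂X = 0 and conformal: ⟨∂ᵢX, ∂ⱼX⟩ = E δᵢⱼ on U with E > 0. Let n : U → ℝ³ be twice continuously differentiable with ‖n‖ ≡ 1 and ⟨n, ∂ⱼX⟩ ≡ 0 for j = 1, 2, and let K : U → ℝ satisfy Δnᵏ = 2 K E nᵏ on U for k = 1, 2, 3. Then the support function u := ⟨X, n⟩ satisfies Δu = 2 K E u on U; that is, u lies in the kernel of the Jacobi operator L_g = Δ_g − 2K_g of the area functional. -/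

import Mathlib

open scoped RealInnerProductSpace

/-- The partial derivative in the `j`-th coordinate direction of a map defined on `ℝ²`. -/
noncomputable def pd {F : Type*} [NormedAddCommGroup F] [NormedSpace ℝ F]
    (j : Fin 2) (X : EuclideanSpace ℝ (Fin 2) → F) (u : EuclideanSpace ℝ (Fin 2)) : F :=
  fderiv ℝ X u (EuclideanSpace.single j 1)

/-- The flat Laplacian `Δ = ∂₁∂₁ + ∂₂∂₂` of a real-valued function on `ℝ²`. -/
noncomputable def flatLap (f : EuclideanSpace ℝ (Fin 2) → ℝ)
    (u : EuclideanSpace ℝ (Fin 2)) : ℝ :=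
  pd 0 (pd 0 f) u + pd 1 (pd 1 f) u

lemma contDiffAt_pd {F : Type*} [NormedAddCommGroup F] [NormedSpace ℝ F]
    {f : EuclideanSpace ℝ (Fin 2) → F} {u : EuclideanSpace ℝ (Fin 2)} {m : ℕ∞} (j : Fin 2)
    (hf : ContDiffAt ℝ (m + 1) f u) : ContDiffAt ℝ m (pd j f) u :=
  (hf.fderiv_right le_rfl).clm_apply contDiffAt_const

lemma pd_congr {F : Type*} [NormedAddCommGroup F] [NormedSpace ℝ F]
    {f g : EuclideanSpace ℝ (Fin 2) → F} {u : EuclideanSpace ℝ (Fin 2)} (j : Fin 2)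
    (h : f =ᶠ[nhds u] g) : pd j f u = pd j g u := by
  unfold pd; rw [h.fderiv_eq]

lemma pd_add {f g : EuclideanSpace ℝ (Fin 2) → ℝ}
    {u : EuclideanSpace ℝ (Fin 2)} (j : Fin 2)
    (hf : DifferentiableAt ℝ f u) (hg : DifferentiableAt ℝ g u) :
    pd j (fun w => f w + g w) u = pd j f u + pd j g u := by
  unfold pd; rw [fderiv_fun_add hf hg]; rfl

lemma pd_inner {f g : EuclideanSpace ℝ (Fin 2) → EuclideanSpace ℝ (Fin 3)}
    {u : EuclideanSpace ℝ (Fin 2)} (j : Fin 2)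
    (hf : DifferentiableAt ℝ f u) (hg : DifferentiableAt ℝ g u) :
    pd j (fun w => ⟪f w, g w⟫) u = ⟪f u, pd j g u⟫ + ⟪pd j f u, g u⟫ := by
  unfold pd; rw [fderiv_inner_apply (𝕜 := ℝ) hf hg]

lemma pd_proj {f : EuclideanSpace ℝ (Fin 2) → EuclideanSpace ℝ (Fin 3)}
    {u : EuclideanSpace ℝ (Fin 2)} (j : Fin 2) (k : Fin 3)
    (hf : DifferentiableAt ℝ f u) :
    pd j (fun w => f w k) u = pd j f u k := by
  unfold pd
  have h : (fun w => f w k) = (EuclideanSpace.proj (𝕜 := ℝ) k) ∘ f := rfl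
  rw [h, fderiv_comp _ (EuclideanSpace.proj (𝕜 := ℝ) k).differentiableAt hf]
  rw [ContinuousLinearMap.fderiv]; simp

/-- (Lemma 3.3 of the paper, in coordinates.) For a conformally
parametrized minimal surface `X` with conformal factor `E`, Gauss curvature `K`, and
unit normal `n` whose components are Jacobi fields (`Δnᵏ = 2KEnᵏ`), the support
function `u = ⟨X, n⟩` is a Jacobi field: `Δ⟨X, n⟩ = 2KE⟨X, n⟩`. -/
theorem support_function_is_jacobi_field
    {U : Set (EuclideanSpace ℝ (Fin 2))} (hU : IsOpen U)
    (X : EuclideanSpace ℝ (Fin 2) → EuclideanSpace ℝ (Fin 3))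
    (hC : ContDiffOn ℝ 2 X U)
    (hharm : ∀ u ∈ U, pd 0 (pd 0 X) u + pd 1 (pd 1 X) u = 0)
    (E : EuclideanSpace ℝ (Fin 2) → ℝ) (hE : ∀ u ∈ U, 0 < E u)
    (hconf : ∀ u ∈ U, ∀ i j : Fin 2, ⟪pd i X u, pd j X u⟫ = if i = j then E u else 0)
    (n : EuclideanSpace ℝ (Fin 2) → EuclideanSpace ℝ (Fin 3))
    (hn : ContDiffOn ℝ 2 n U)
    (hn1 : ∀ u ∈ U, ‖n u‖ = 1)
    (hperp : ∀ u ∈ U, ∀ j : Fin 2, ⟪n u, pd j X u⟫ = 0)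
    (K : EuclideanSpace ℝ (Fin 2) → ℝ)
    (hjac : ∀ u ∈ U, ∀ k : Fin 3,
      flatLap (fun w => n w k) u = 2 * K u * E u * n u k) :
    ∀ u ∈ U,
      flatLap (fun w => ⟪X w, n w⟫) u = 2 * K u * E u * ⟪X u, n u⟫ := by
  have h21 : (2 : ℕ∞) = 1 + 1 := by norm_num
  -- basic differentiability
  have hX2 : ∀ v ∈ U, ContDiffAt ℝ 2 X v := fun v hv => hC.contDiffAt (hU.mem_nhds hv)
  have hn2 : ∀ v ∈ U, ContDiffAt ℝ 2 n v := fun v hv => hn.contDiffAt (hU.mem_nhds hv)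
  have hXd : ∀ v ∈ U, DifferentiableAt ℝ X v := fun v hv =>
    (hX2 v hv).differentiableAt (by norm_num)
  have hnd : ∀ v ∈ U, DifferentiableAt ℝ n v := fun v hv =>
    (hn2 v hv).differentiableAt (by norm_num)
  have hpdX : ∀ v ∈ U, ∀ j, ContDiffAt ℝ 1 (pd j X) v := fun v hv j =>
    contDiffAt_pd j ((hX2 v hv).of_le (by norm_num))
  have hpdn : ∀ v ∈ U, ∀ j, ContDiffAt ℝ 1 (pd j n) v := fun v hv j =>
    contDiffAt_pd j ((hn2 v hv).of_le (by norm_num))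
  have hpdXd : ∀ v ∈ U, ∀ j, DifferentiableAt ℝ (pd j X) v := fun v hv j =>
    (hpdX v hv j).differentiableAt one_ne_zero
  have hpdnd : ∀ v ∈ U, ∀ j, DifferentiableAt ℝ (pd j n) v := fun v hv j =>
    (hpdn v hv j).differentiableAt one_ne_zero
  intro u hu
  have hmem : U ∈ nhds u := hU.mem_nhds hu
  -- second derivative of the inner product
  have key : ∀ j : Fin 2, pd j (pd j (fun w => ⟪X w, n w⟫)) u =
      ⟪X u, pd j (pd j n) u⟫ + 2 * ⟪pd j X u, pd j n u⟫ + ⟪pd j (pd j X) u, n u⟫ := by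
    intro j
    have e1 : (pd j (fun w => ⟪X w, n w⟫)) =ᶠ[nhds u]
        (fun w => ⟪X w, pd j n w⟫ + ⟪pd j X w, n w⟫) := by
      filter_upwards [hmem] with v hv
      exact pd_inner j (hXd v hv) (hnd v hv)
    rw [pd_congr j e1,
      pd_add j ((hXd u hu).inner ℝ (hpdnd u hu j)) ((hpdXd u hu j).inner ℝ (hnd u hu)),
      pd_inner j (hXd u hu) (hpdnd u hu j), pd_inner j (hpdXd u hu j) (hnd u hu)]
    ring
  -- differentiating the orthogonality relation
  have perp' : ∀ j : Fin 2, ⟪n u, pd j (pd j X) u⟫ + ⟪pd j n u, pd j X u⟫ = 0 := by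
    intro j
    have e0 : (fun w => ⟪n w, pd j X w⟫) =ᶠ[nhds u] (fun _ => (0 : ℝ)) := by
      filter_upwards [hmem] with v hv
      exact hperp v hv j
    have := pd_congr j e0
    rw [pd_inner j (hnd u hu) (hpdXd u hu j)] at this
    have hz : pd j (fun _ : EuclideanSpace ℝ (Fin 2) => (0 : ℝ)) u = 0 := by
      unfold pd; simp
    rw [hz] at this
    linarith [this]
  -- the normal-component term
  have hinner3 : ∀ (x y : EuclideanSpace ℝ (Fin 3)), ⟪x, y⟫ = ∑ k : Fin 3, x k * y k := by
    intro x y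
    simp [PiLp.inner_apply, mul_comm]
  have last : ⟪X u, pd 0 (pd 0 n) u⟫ + ⟪X u, pd 1 (pd 1 n) u⟫
      = 2 * K u * E u * ⟪X u, n u⟫ := by
    have hcomp : ∀ j : Fin 2, ∀ k : Fin 3,
        pd j (pd j (fun w => n w k)) u = pd j (pd j n) u k := by
      intro j k
      have e2 : (pd j (fun w => n w k)) =ᶠ[nhds u] (fun w => pd j n w k) := by
        filter_upwards [hmem] with v hv
        exact pd_proj j k (hnd v hv)
      rw [pd_congr j e2, pd_proj j k (hpdnd u hu j)]
    rw [hinner3, hinner3, hinner3, ← Finset.sum_add_distrib, Finset.mul_sum]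
    refine Finset.sum_congr rfl fun k _ => ?_
    have := hjac u hu k
    rw [flatLap, hcomp 0 k, hcomp 1 k] at this
    linear_combination X u k * this
  -- assemble
  have hsum0 : ⟪pd 0 (pd 0 X) u, n u⟫ + ⟪pd 1 (pd 1 X) u, n u⟫ = 0 := by
    rw [← inner_add_left, hharm u hu, inner_zero_left]
  have hsum0' : ⟪n u, pd 0 (pd 0 X) u⟫ + ⟪n u, pd 1 (pd 1 X) u⟫ = 0 := by
    rw [← inner_add_right, hharm u hu, inner_zero_right]
  have hcross : ⟪pd 0 X u, pd 0 n u⟫ + ⟪pd 1 X u, pd 1 n u⟫ = 0 := by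
    have p0 := perp' 0
    have p1 := perp' 1
    have c0 : ⟪pd 0 X u, pd 0 n u⟫ = ⟪pd 0 n u, pd 0 X u⟫ := real_inner_comm _ _
    have c1 : ⟪pd 1 X u, pd 1 n u⟫ = ⟪pd 1 n u, pd 1 X u⟫ := real_inner_comm _ _
    linarith [hsum0']
  rw [flatLap, key 0, key 1]
  linarith [last, hsum0, hcross]
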